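/- Let G be a (C4, diamond)-free graph with no clique cutset, let w be a weight function on V(G) with total weight 1, and let U be the set of unbalanced vertices (vertices v for which some component of G \ N[v] has weight greater than 1/2). For v in U define the canonical star separation S_v = (A_v, C_v, B_v), where B_v is the largest-weight component of G \ N[v], C_v = {v} ∪ (N(v) ∩ N(B_v)), and A_v = V(G) \ (B_v ∪ C_v). Define the relation ≤_A on U by x ≤_A y iff x = y or y ∈ A_x. Then ≤_A is a partial order on U. -/

import Mathlib

open SimpleGraph Set

namespace Paper

variable {V : Type} {W : Type}

/-- X and Y are anticomplete: no edge between them. -/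
def Anticomplete (G : SimpleGraph V) (X Y : Set V) : Prop :=
  ∀ x ∈ X, ∀ y ∈ Y, ¬ G.Adj x y

/-- Closed neighborhood N[v]. -/
def closedNbr (G : SimpleGraph V) (v : V) : Set V := insert v (G.neighborSet v)

/-- Open neighborhood N(X) of a set of vertices. -/
def setNbr (G : SimpleGraph V) (X : Set V) : Set V :=
  {v | v ∉ X ∧ ∃ x ∈ X, G.Adj x v}

/-- Closed neighborhood N[X] of a set of vertices. -/
def closedNbrSet (G : SimpleGraph V) (X : Set V) : Set V := X ∪ setNbr G X

/-- D is a connected component of the subgraph of G induced on S. -/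
def IsComponentOf (G : SimpleGraph V) (S D : Set V) : Prop :=
  D.Nonempty ∧ D ⊆ S ∧ (G.induce D).Connected ∧
    ∀ D' : Set V, D ⊆ D' → D' ⊆ S → (G.induce D').Connected → D' = D

/-- G contains no induced copy of H. -/
def HFree (G : SimpleGraph V) (H : SimpleGraph W) : Prop :=
  ∀ s : Set V, ¬ Nonempty ((G.induce s) ≃g H)

/-- The diamond: K₄ minus the edge 01. -/
def diamond : SimpleGraph (Fin 4) :=
  SimpleGraph.fromRel (fun x y => s(x, y) ≠ s(0, 1))

/-- H is a hole of G: an induced cycle of length at least 4. -/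
def IsHole (G : SimpleGraph V) (H : Set V) : Prop :=
  ∃ n, 4 ≤ n ∧ Nonempty ((G.induce H) ≃g cycleGraph n)

/-- H is an even hole of G. -/
def IsEvenHole (G : SimpleGraph V) (H : Set V) : Prop :=
  ∃ n, 4 ≤ n ∧ Even n ∧ Nonempty ((G.induce H) ≃g cycleGraph n)

/-- (H, w) is a wheel: a hole plus a vertex with ≥ 3 pairwise non-adjacent neighbors in H. -/
def IsWheel (G : SimpleGraph V) (H : Set V) (w : V) : Prop :=
  IsHole G H ∧ ∃ x y z, x ∈ H ∩ G.neighborSet w ∧ y ∈ H ∩ G.neighborSet w ∧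
    z ∈ H ∩ G.neighborSet w ∧ x ≠ y ∧ x ≠ z ∧ y ≠ z ∧
    ¬ G.Adj x y ∧ ¬ G.Adj x z ∧ ¬ G.Adj y z

/-- (H, v) is a line wheel: N(v) ∩ H is a union of two disjoint edges. -/
def IsLineWheel (G : SimpleGraph V) (H : Set V) (v : V) : Prop :=
  IsHole G H ∧ v ∉ H ∧ ∃ a b c d : V,
    a ≠ b ∧ a ≠ c ∧ a ≠ d ∧ b ≠ c ∧ b ≠ d ∧ c ≠ d ∧
    G.neighborSet v ∩ H = {a, b, c, d} ∧
    G.Adj a b ∧ G.Adj c d ∧ ¬ G.Adj a c ∧ ¬ G.Adj a d ∧ ¬ G.Adj b c ∧ ¬ G.Adj b d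

/-- An even wheel: a line wheel, or a wheel with an even number of neighbors in the hole,
not forming a path of length one. -/
def IsEvenWheel (G : SimpleGraph V) (H : Set V) (v : V) : Prop :=
  IsLineWheel G H v ∨
    (IsWheel G H v ∧ Even ((G.neighborSet v ∩ H).ncard) ∧
      ¬ ∃ a b, a ≠ b ∧ G.Adj a b ∧ G.neighborSet v ∩ H = {a, b})

/-- The set of vertices of a walk. -/
def suppSet (G : SimpleGraph V) {a b : V} (p : G.Walk a b) : Set V :=
  {v | v ∈ p.support}

/-- A walk is induced: the only adjacencies among its vertices are its own edges. -/
def InducedWalk (G : SimpleGraph V) {a b : V} (p : G.Walk a b) : Prop :=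
  ∀ u v, u ∈ p.support → v ∈ p.support → G.Adj u v → s(u, v) ∈ p.edges

/-- The interior of a walk: its vertices except the two endpoints. -/
def wInterior (G : SimpleGraph V) {a b : V} (p : G.Walk a b) : Set V :=
  {v | v ∈ p.support ∧ v ≠ a ∧ v ≠ b}

/-- G contains a theta as an induced subgraph. -/
def ContainsTheta (G : SimpleGraph V) : Prop :=
  ∃ (a b : V) (p₁ p₂ p₃ : G.Walk a b),
    ¬ G.Adj a b ∧
    p₁.IsPath ∧ p₂.IsPath ∧ p₃.IsPath ∧
    InducedWalk G p₁ ∧ InducedWalk G p₂ ∧ InducedWalk G p₃ ∧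
    2 ≤ p₁.length ∧ 2 ≤ p₂.length ∧ 2 ≤ p₃.length ∧
    Disjoint (wInterior G p₁) (wInterior G p₂) ∧
    Disjoint (wInterior G p₁) (wInterior G p₃) ∧
    Disjoint (wInterior G p₂) (wInterior G p₃) ∧
    Anticomplete G (wInterior G p₁) (wInterior G p₂) ∧
    Anticomplete G (wInterior G p₁) (wInterior G p₃) ∧
    Anticomplete G (wInterior G p₂) (wInterior G p₃)

/-- G contains a pyramid as an induced subgraph. -/
def ContainsPyramid (G : SimpleGraph V) : Prop :=
  ∃ (a b₁ b₂ b₃ : V) (p₁ : G.Walk a b₁) (p₂ : G.Walk a b₂) (p₃ : G.Walk a b₃),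
    G.Adj b₁ b₂ ∧ G.Adj b₁ b₃ ∧ G.Adj b₂ b₃ ∧
    p₁.IsPath ∧ p₂.IsPath ∧ p₃.IsPath ∧
    InducedWalk G p₁ ∧ InducedWalk G p₂ ∧ InducedWalk G p₃ ∧
    1 ≤ p₁.length ∧ 1 ≤ p₂.length ∧ 1 ≤ p₃.length ∧
    ((2 ≤ p₁.length ∧ 2 ≤ p₂.length) ∨ (2 ≤ p₁.length ∧ 2 ≤ p₃.length) ∨
      (2 ≤ p₂.length ∧ 2 ≤ p₃.length)) ∧
    Disjoint (suppSet G p₁ \ {a}) (suppSet G p₂ \ {a}) ∧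
    Disjoint (suppSet G p₁ \ {a}) (suppSet G p₃ \ {a}) ∧
    Disjoint (suppSet G p₂ \ {a}) (suppSet G p₃ \ {a}) ∧
    (∀ u v, u ∈ suppSet G p₁ \ {a} → v ∈ suppSet G p₂ \ {a} → G.Adj u v →
      u = b₁ ∧ v = b₂) ∧
    (∀ u v, u ∈ suppSet G p₁ \ {a} → v ∈ suppSet G p₃ \ {a} → G.Adj u v →
      u = b₁ ∧ v = b₃) ∧
    (∀ u v, u ∈ suppSet G p₂ \ {a} → v ∈ suppSet G p₃ \ {a} → G.Adj u v →
      u = b₂ ∧ v = b₃)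

/-- G contains a prism as an induced subgraph. -/
def ContainsPrism (G : SimpleGraph V) : Prop :=
  ∃ (a₁ a₂ a₃ b₁ b₂ b₃ : V) (p₁ : G.Walk a₁ b₁) (p₂ : G.Walk a₂ b₂) (p₃ : G.Walk a₃ b₃),
    G.Adj a₁ a₂ ∧ G.Adj a₁ a₃ ∧ G.Adj a₂ a₃ ∧
    G.Adj b₁ b₂ ∧ G.Adj b₁ b₃ ∧ G.Adj b₂ b₃ ∧
    p₁.IsPath ∧ p₂.IsPath ∧ p₃.IsPath ∧
    InducedWalk G p₁ ∧ InducedWalk G p₂ ∧ InducedWalk G p₃ ∧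
    Disjoint (suppSet G p₁) (suppSet G p₂) ∧
    Disjoint (suppSet G p₁) (suppSet G p₃) ∧
    Disjoint (suppSet G p₂) (suppSet G p₃) ∧
    (∀ u v, u ∈ suppSet G p₁ → v ∈ suppSet G p₂ → G.Adj u v →
      s(u, v) = s(a₁, a₂) ∨ s(u, v) = s(b₁, b₂)) ∧
    (∀ u v, u ∈ suppSet G p₁ → v ∈ suppSet G p₃ → G.Adj u v →
      s(u, v) = s(a₁, a₃) ∨ s(u, v) = s(b₁, b₃)) ∧
    (∀ u v, u ∈ suppSet G p₂ → v ∈ suppSet G p₃ → G.Adj u v →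
      s(u, v) = s(a₂, a₃) ∨ s(u, v) = s(b₂, b₃))

/-- G has a clique cutset. -/
def HasCliqueCutset (G : SimpleGraph V) : Prop :=
  ∃ C : Set V, G.IsClique C ∧ ¬ (G.induce Cᶜ).Preconnected

/-- (A, C, B) is a separation of G. -/
def IsSeparation (G : SimpleGraph V) (A C B : Set V) : Prop :=
  A ∪ C ∪ B = Set.univ ∧ Disjoint A C ∧ Disjoint A B ∧ Disjoint C B ∧
    Anticomplete G A B

/-- The weight of a set of vertices. -/
noncomputable def fweight (w : V → ℝ) (X : Set V) : ℝ := ∑ᶠ x ∈ X, w x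

/-- X is a (w, c)-balanced separator of G. -/
def IsBalSep (G : SimpleGraph V) (w : V → ℝ) (c : ℝ) (X : Set V) : Prop :=
  ∀ D, IsComponentOf G Xᶜ D → fweight w D ≤ c

/-- The treewidth of G is at most k. -/
def TreewidthLE (G : SimpleGraph V) (k : ℕ) : Prop :=
  ∃ (T : Type) (tG : SimpleGraph T) (χ : T → Set V),
    tG.IsTree ∧
    (∀ v, ∃ t, v ∈ χ t) ∧
    (∀ u v, G.Adj u v → ∃ t, u ∈ χ t ∧ v ∈ χ t) ∧
    (∀ v, (tG.induce {t | v ∈ χ t}).Connected) ∧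
    ∀ t, (χ t).ncard ≤ k + 1

/-- The Ramsey number R(t, s). -/
noncomputable def ramsey (t s : ℕ) : ℕ :=
  sInf {n | ∀ G : SimpleGraph (Fin n), ¬ G.CliqueFree t ∨ ¬ Gᶜ.CliqueFree s}

/-- (H, v) is a twin wheel: N(v) ∩ H is a path of length two. -/
def IsTwinWheel (G : SimpleGraph V) (H : Set V) (v : V) : Prop :=
  IsHole G H ∧ ∃ a b c : V, a ≠ b ∧ a ≠ c ∧ b ≠ c ∧
    G.neighborSet v ∩ H = {a, b, c} ∧ G.Adj a b ∧ G.Adj b c ∧ ¬ G.Adj a c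

/-- (H, v) is a short pyramid: v has exactly three neighbors in H, exactly two adjacent. -/
def IsShortPyramid (G : SimpleGraph V) (H : Set V) (v : V) : Prop :=
  IsHole G H ∧ ∃ a b c : V, a ≠ b ∧ a ≠ c ∧ b ≠ c ∧
    G.neighborSet v ∩ H = {a, b, c} ∧ G.Adj a b ∧ ¬ G.Adj a c ∧ ¬ G.Adj b c

/-- A proper wheel: a wheel that is neither a twin wheel nor a short pyramid. -/
def IsProperWheel (G : SimpleGraph V) (H : Set V) (v : V) : Prop :=
  IsWheel G H v ∧ ¬ IsTwinWheel G H v ∧ ¬ IsShortPyramid G H v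

/-- A universal wheel: v is complete to H. -/
def IsUniversalWheel (G : SimpleGraph V) (H : Set V) (v : V) : Prop :=
  IsWheel G H v ∧ H ⊆ G.neighborSet v




section Aux7

lemma induce_singleton_connected (G : SimpleGraph V) (u : V) :
    (G.induce ({u} : Set V)).Connected := by
  have : Nonempty ↥({u} : Set V) := ⟨⟨u, rfl⟩⟩
  refine ⟨fun a b => ?_⟩
  obtain ⟨a, ha⟩ := a; obtain ⟨b, hb⟩ := b
  cases ha; cases hb; exact Reachable.refl _

lemma induce_insert_connected (G : SimpleGraph V) {B : Set V}
    (hB : (G.induce B).Connected) {u b : V} (hb : b ∈ B) (hadj : G.Adj u b) :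
    (G.induce (insert u B)).Connected := by
  have h := SimpleGraph.connected_induce_union (induce_singleton_connected G u).preconnected hB.preconnected
    (Set.mem_singleton u) hb hadj
  rwa [Set.singleton_union] at h

lemma comp_closure {G : SimpleGraph V} {S D : Set V} (h : IsComponentOf G S D)
    {u v : V} (hu : u ∈ D) (hadj : G.Adj u v) (hv : v ∈ S) : v ∈ D := by
  by_cases hvD : v ∈ D
  · exact hvD
  · have hconn := induce_insert_connected G h.2.2.1 hu hadj.symm
    have heq := h.2.2.2 (insert v D) (Set.subset_insert _ _) (Set.insert_subset hv h.2.1) hconn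
    rw [← heq]; exact Set.mem_insert _ _

lemma comp_eq_of_inter {G : SimpleGraph V} {S D1 D2 : Set V}
    (h1 : IsComponentOf G S D1) (h2 : IsComponentOf G S D2)
    (hne : (D1 ∩ D2).Nonempty) : D1 = D2 := by
  have hc := SimpleGraph.induce_union_connected h1.2.2.1.preconnected h2.2.2.1.preconnected hne
  have e1 := h1.2.2.2 (D1 ∪ D2) Set.subset_union_left (Set.union_subset h1.2.1 h2.2.1) hc
  have e2 := h2.2.2.2 (D1 ∪ D2) Set.subset_union_right (Set.union_subset h1.2.1 h2.2.1) hc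
  rw [← e1, e2]

lemma exists_comp [Fintype V] {G : SimpleGraph V} {S X : Set V} (hXne : X.Nonempty)
    (hXS : X ⊆ S) (hXc : (G.induce X).Connected) :
    ∃ D, IsComponentOf G S D ∧ X ⊆ D := by
  classical
  obtain ⟨D, hD, hmax⟩ := Set.Finite.exists_maximalFor (fun D : Set V => D.ncard)
    {D | X ⊆ D ∧ D ⊆ S ∧ (G.induce D).Connected} (Set.toFinite _) ⟨X, subset_rfl, hXS, hXc⟩
  refine ⟨D, ⟨hXne.mono hD.1, hD.2.1, hD.2.2, ?_⟩, hD.1⟩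
  intro D' hDD' hD'S hD'c
  have hD' : D' ∈ {D | X ⊆ D ∧ D ⊆ S ∧ (G.induce D).Connected} :=
    ⟨hD.1.trans hDD', hD'S, hD'c⟩
  have hcard := hmax hD' (Set.ncard_le_ncard hDD' (Set.toFinite _))
  exact (Set.eq_of_subset_of_ncard_le hDD' hcard.ge (Set.toFinite _)).symm

lemma fweight_eq_sum [Fintype V] (w : V → ℝ) (X : Set V) :
    fweight w X = ∑ x ∈ (Set.toFinite X).toFinset, w x := by
  rw [fweight, ← finsum_mem_coe_finset, Set.Finite.coe_toFinset]

lemma fweight_mono [Fintype V] {w : V → ℝ} (hw : ∀ v, 0 ≤ w v) {X Y : Set V} (h : X ⊆ Y) :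
    fweight w X ≤ fweight w Y := by
  rw [fweight_eq_sum, fweight_eq_sum]
  refine Finset.sum_le_sum_of_subset_of_nonneg ?_ (fun i _ _ => hw i)
  exact Set.Finite.toFinset_subset_toFinset.mpr h

lemma fweight_union [Fintype V] (w : V → ℝ) {X Y : Set V} (h : Disjoint X Y) :
    fweight w (X ∪ Y) = fweight w X + fweight w Y := by
  classical
  rw [fweight_eq_sum, fweight_eq_sum, fweight_eq_sum]
  have he : (Set.toFinite (X ∪ Y)).toFinset
      = (Set.toFinite X).toFinset ∪ (Set.toFinite Y).toFinset := by
    ext a; simp only [Set.Finite.mem_toFinset, Finset.mem_union, Set.mem_union]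
  rw [he]
  refine Finset.sum_union ?_
  rw [Finset.disjoint_left]
  intro a ha hb
  exact Set.disjoint_left.mp h (by simpa using ha) (by simpa using hb)

lemma no_c4 {G : SimpleGraph V} (hC4 : HFree G (cycleGraph 4)) {a b c d : V}
    (hab : G.Adj a b) (hbc : G.Adj b c) (hcd : G.Adj c d) (hda : G.Adj d a)
    (hac : ¬ G.Adj a c) (hbd : ¬ G.Adj b d) (hac' : a ≠ c) (hbd' : b ≠ d) : False := by
  classical
  set s : Set V := {a, b, c, d} with hs
  have ha : a ∈ s := by simp [hs]
  have hb : b ∈ s := by simp [hs]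
  have hc : c ∈ s := by simp [hs]
  have hd : d ∈ s := by simp [hs]
  have hba : b ≠ a := hab.ne'
  have hcb : c ≠ b := hbc.ne'
  have hdc : d ≠ c := hcd.ne'
  have hda' : d ≠ a := hda.ne
  have hca : c ≠ a := hac'.symm
  have hdb : d ≠ b := hbd'.symm
  have hca' : ¬ G.Adj c a := fun h => hac h.symm
  have hdb' : ¬ G.Adj d b := fun h => hbd h.symm
  let f : Fin 4 → ↥s := ![⟨a, ha⟩, ⟨b, hb⟩, ⟨c, hc⟩, ⟨d, hd⟩]
  let g : ↥s → Fin 4 := fun z =>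
    if (z : V) = a then 0 else if (z : V) = b then 1 else if (z : V) = c then 2 else 3
  have iso : (cycleGraph 4) ≃g (G.induce s) := by
    refine ⟨⟨f, g, ?_, ?_⟩, ?_⟩
    · intro i
      fin_cases i <;> simp [f, g, hba, hca, hcb, hda', hdb, hdc]
    · rintro ⟨z, hz⟩
      have : z = a ∨ z = b ∨ z = c ∨ z = d := by simpa [hs] using hz
      rcases this with rfl | rfl | rfl | rfl <;>
        simp [f, g, hba, hca, hcb, hda', hdb, hdc]
    · intro i j
      fin_cases i <;> fin_cases j <;>
        simp [f, comap_adj, Function.Embedding.coe_subtype, cycleGraph_adj,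
          hab, hbc, hcd, hda, hab.symm, hbc.symm, hcd.symm, hda.symm,
          hac, hbd, hca', hdb', G.irrefl] <;> decide
  exact hC4 s ⟨iso.symm⟩

lemma no_diamond {G : SimpleGraph V} (hdia : HFree G diamond) {u v x y : V}
    (hux : G.Adj u x) (huy : G.Adj u y) (hvx : G.Adj v x) (hvy : G.Adj v y)
    (hxy : G.Adj x y) (huv : ¬ G.Adj u v) (huv' : u ≠ v) : False := by
  classical
  set s : Set V := {u, v, x, y} with hs
  have h0 : u ∈ s := by simp [hs]
  have h1 : v ∈ s := by simp [hs]
  have h2 : x ∈ s := by simp [hs]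
  have h3 : y ∈ s := by simp [hs]
  have hvu : v ≠ u := huv'.symm
  have hxu : x ≠ u := hux.ne'
  have hxv : x ≠ v := hvx.ne'
  have hyu : y ≠ u := huy.ne'
  have hyv : y ≠ v := hvy.ne'
  have hyx : y ≠ x := hxy.ne'
  have hvu' : ¬ G.Adj v u := fun h => huv h.symm
  let f : Fin 4 → ↥s := ![⟨u, h0⟩, ⟨v, h1⟩, ⟨x, h2⟩, ⟨y, h3⟩]
  let g : ↥s → Fin 4 := fun z =>
    if (z : V) = u then 0 else if (z : V) = v then 1 else if (z : V) = x then 2 else 3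
  have iso : diamond ≃g (G.induce s) := by
    refine ⟨⟨f, g, ?_, ?_⟩, ?_⟩
    · intro i
      fin_cases i <;> simp [f, g, hvu, hxu, hxv, hyu, hyv, hyx]
    · rintro ⟨z, hz⟩
      have : z = u ∨ z = v ∨ z = x ∨ z = y := by simpa [hs] using hz
      rcases this with rfl | rfl | rfl | rfl <;>
        simp [f, g, hvu, hxu, hxv, hyu, hyv, hyx]
    · intro i j
      fin_cases i <;> fin_cases j <;>
        simp [f, comap_adj, Function.Embedding.coe_subtype, diamond,
          SimpleGraph.fromRel_adj, hux, huy, hvx, hvy, hxy,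
          hux.symm, huy.symm, hvx.symm, hvy.symm, hxy.symm, huv, hvu', G.irrefl,
          hvu, hxu, hxv, hyu, hyv, hyx] <;> decide
  exact hdia s ⟨iso.symm⟩

lemma key [Fintype V] {G : SimpleGraph V}
    {w : V → ℝ} (hw : ∀ v, 0 ≤ w v ∧ w v ≤ 1) (hwt : fweight w Set.univ = 1)
    {U : Set V}
    (hU : U = {v | ∃ D, IsComponentOf G ((closedNbr G v)ᶜ) D ∧ 1/2 < fweight w D})
    {B C A : V → Set V}
    (hB : ∀ v ∈ U, IsComponentOf G ((closedNbr G v)ᶜ) (B v) ∧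
      ∀ D, IsComponentOf G ((closedNbr G v)ᶜ) D → fweight w D ≤ fweight w (B v))
    (hC : ∀ v ∈ U, C v = insert v (G.neighborSet v ∩ setNbr G (B v)))
    (hA : ∀ v ∈ U, A v = (B v ∪ C v)ᶜ)
    {x y : V} (hx : x ∈ U) (hy : y ∈ U) (hyA : y ∈ A x) :
    B x ⊆ B y ∧ C x \ {x} ⊆ B y ∪ C y := by
  obtain ⟨hBx, hBxmax⟩ := hB x hx
  obtain ⟨hBy, hBymax⟩ := hB y hy
  have hwB : ∀ v ∈ U, 1/2 < fweight w (B v) := by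
    intro v hv
    have hv' := hv
    rw [hU] at hv'
    obtain ⟨D, hD, hwD⟩ := hv'
    exact lt_of_lt_of_le hwD ((hB v hv).2 D hD)
  rw [hA x hx] at hyA
  have hyBx : y ∉ B x := fun h => hyA (Set.mem_union_left _ h)
  have hyCx : y ∉ C x := fun h => hyA (Set.mem_union_right _ h)
  have hynadj : ∀ b ∈ B x, ¬ G.Adj y b := by
    intro b hb hadj
    have hyN : y ∈ closedNbr G x := by
      by_contra hyN
      exact hyBx (comp_closure hBx hb hadj.symm hyN)
    have hyx : y ≠ x := fun h => hyCx (by rw [hC x hx, h]; exact Set.mem_insert _ _)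
    have hyNx : y ∈ G.neighborSet x := by
      rcases Set.mem_insert_iff.mp hyN with h | h
      · exact absurd h hyx
      · exact h
    exact hyCx (by
      rw [hC x hx]
      exact Set.mem_insert_of_mem _ ⟨hyNx, hyBx, b, hb, hadj.symm⟩)
  have hBxSy : B x ⊆ (closedNbr G y)ᶜ := by
    intro b hb hmem
    rcases Set.mem_insert_iff.mp hmem with rfl | h
    · exact hyBx hb
    · exact hynadj b hb h
  obtain ⟨D, hD, hBxD⟩ := exists_comp hBx.1 hBxSy hBx.2.2.1
  have hDBy : D = B y := by
    by_contra hne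
    have hdisj : Disjoint D (B y) := by
      rw [Set.disjoint_iff_inter_eq_empty]
      by_contra hne'
      exact hne (comp_eq_of_inter hD hBy (Set.nonempty_iff_ne_empty.mpr hne'))
    have h1 : 1/2 < fweight w D :=
      lt_of_lt_of_le (hwB x hx) (fweight_mono (fun v => (hw v).1) hBxD)
    have h2 : 1/2 < fweight w (B y) := hwB y hy
    have h3 : fweight w (D ∪ B y) ≤ 1 :=
      hwt ▸ fweight_mono (fun v => (hw v).1) (Set.subset_univ _)
    rw [fweight_union w hdisj] at h3
    linarith
  have hBxBy : B x ⊆ B y := hDBy ▸ hBxD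
  refine ⟨hBxBy, ?_⟩
  rintro c ⟨hcC0, hcx⟩
  have hcx' : c ≠ x := hcx
  have hcC := hcC0
  rw [hC x hx] at hcC
  rcases Set.mem_insert_iff.mp hcC with rfl | hcC'
  · exact absurd rfl hcx'
  obtain ⟨hcN, hcBx, b, hb, hbc⟩ := hcC'
  by_cases hcBy : c ∈ B y
  · exact Or.inl hcBy
  have hbBy : b ∈ B y := hBxBy hb
  have hcNy : c ∈ closedNbr G y := by
    by_contra h
    exact hcBy (comp_closure hBy hbBy hbc h)
  have hcy : c ≠ y := fun h => hyCx (h ▸ hcC0)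
  have hcNy' : c ∈ G.neighborSet y := by
    rcases Set.mem_insert_iff.mp hcNy with h | h
    · exact absurd h hcy
    · exact h
  right
  rw [hC y hy]
  exact Set.mem_insert_of_mem _ ⟨hcNy', hcBy, b, hbBy, hbc⟩

lemma antisym [Fintype V] {G : SimpleGraph V}
    (hC4 : HFree G (cycleGraph 4)) (hdia : HFree G diamond)
    (hcc : ¬ HasCliqueCutset G)
    {w : V → ℝ} (hw : ∀ v, 0 ≤ w v ∧ w v ≤ 1) (hwt : fweight w Set.univ = 1)
    {U : Set V}
    (hU : U = {v | ∃ D, IsComponentOf G ((closedNbr G v)ᶜ) D ∧ 1/2 < fweight w D})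
    {B C A : V → Set V}
    (hB : ∀ v ∈ U, IsComponentOf G ((closedNbr G v)ᶜ) (B v) ∧
      ∀ D, IsComponentOf G ((closedNbr G v)ᶜ) D → fweight w D ≤ fweight w (B v))
    (hC : ∀ v ∈ U, C v = insert v (G.neighborSet v ∩ setNbr G (B v)))
    (hA : ∀ v ∈ U, A v = (B v ∪ C v)ᶜ)
    {x y : V} (hx : x ∈ U) (hy : y ∈ U) (hxy : x ≠ y)
    (hyA : y ∈ A x) (hxA : x ∈ A y) : False := by
  have h1 := key hw hwt hU hB hC hA hx hy hyA
  have h2 := key hw hwt hU hB hC hA hy hx hxA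
  have hBeq : B x = B y := Set.Subset.antisymm h1.1 h2.1
  obtain ⟨hBx, -⟩ := hB x hx
  obtain ⟨hBy, -⟩ := hB y hy
  have hxB : x ∉ B x := fun h => (hBx.2.1 h) (Set.mem_insert _ _)
  have hxadj : ∀ b ∈ B x, ¬ G.Adj x b := fun b hb hadj =>
    (hBx.2.1 hb) (Set.mem_insert_of_mem _ hadj)
  have hClx : setNbr G (B x) ⊆ G.neighborSet x := by
    rintro c ⟨hcB, b, hb, hbc⟩
    have hcN : c ∈ closedNbr G x := by
      by_contra h
      exact hcB (comp_closure hBx hb hbc h)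
    rcases Set.mem_insert_iff.mp hcN with rfl | h
    · exact absurd hbc.symm (hxadj b hb)
    · exact h
  have hCly : setNbr G (B x) ⊆ G.neighborSet y := by
    rintro c ⟨hcB, b, hb, hbc⟩
    have hb' : b ∈ B y := hBeq ▸ hb
    have hcB' : c ∉ B y := hBeq ▸ hcB
    have hcN : c ∈ closedNbr G y := by
      by_contra h
      exact hcB' (comp_closure hBy hb' hbc h)
    rcases Set.mem_insert_iff.mp hcN with rfl | h
    · exact absurd (Set.mem_insert_of_mem _ hbc.symm) (hBy.2.1 hb')
    · exact h
  have hnotclique : ¬ G.IsClique (setNbr G (B x)) := by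
    intro hclq
    apply hcc
    refine ⟨setNbr G (B x), hclq, ?_⟩
    intro hpre
    obtain ⟨b0, hb0⟩ := hBx.1
    have hb0c : b0 ∈ (setNbr G (B x))ᶜ := fun h => h.1 hb0
    have hxc : x ∈ (setNbr G (B x))ᶜ := fun h => G.irrefl (hClx h)
    obtain ⟨p⟩ := hpre ⟨b0, hb0c⟩ ⟨x, hxc⟩
    have hstay : ∀ (a b : ↥((setNbr G (B x))ᶜ))
        (q : (G.induce ((setNbr G (B x))ᶜ)).Walk a b), ↑a ∈ B x → ↑b ∈ B x := by
      intro a b q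
      induction q with
      | nil => exact id
      | @cons a' b' c' hadj q ih =>
        intro ha'
        apply ih
        by_contra hb'
        exact b'.2 ⟨hb', a', ha', hadj⟩
    exact hxB (hstay _ _ p hb0)
  rw [SimpleGraph.isClique_iff] at hnotclique
  unfold Set.Pairwise at hnotclique
  push_neg at hnotclique
  obtain ⟨u, hu, v, hv, huv, hnadj⟩ := hnotclique
  have hxu : G.Adj x u := hClx hu
  have hxv : G.Adj x v := hClx hv
  have hyu : G.Adj y u := hCly hu
  have hyv : G.Adj y v := hCly hv
  by_cases hxyadj : G.Adj x y
  · exact no_diamond hdia hxu.symm hyu.symm hxv.symm hyv.symm hxyadj hnadj huv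
  · exact no_c4 hC4 hxu hyu.symm hyv hxv.symm hxyadj hnadj hxy huv

end Aux7

/-- the relation ≤_A induced by canonical star separations of unbalanced
vertices is a partial order. -/
theorem stmt7 {V : Type} [Fintype V] (G : SimpleGraph V)
    (hC4 : HFree G (SimpleGraph.cycleGraph 4)) (hdia : HFree G diamond)
    (hcc : ¬ HasCliqueCutset G)
    (w : V → ℝ) (hw : ∀ v, 0 ≤ w v ∧ w v ≤ 1) (hwt : fweight w Set.univ = 1)
    (U : Set V)
    (hU : U = {v | ∃ D, IsComponentOf G ((closedNbr G v)ᶜ) D ∧ 1/2 < fweight w D})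
    (B C A : V → Set V)
    (hB : ∀ v ∈ U, IsComponentOf G ((closedNbr G v)ᶜ) (B v) ∧
      ∀ D, IsComponentOf G ((closedNbr G v)ᶜ) D → fweight w D ≤ fweight w (B v))
    (hC : ∀ v ∈ U, C v = insert v (G.neighborSet v ∩ setNbr G (B v)))
    (hA : ∀ v ∈ U, A v = (B v ∪ C v)ᶜ)
    (r : V → V → Prop) (hr : ∀ x y, r x y ↔ x = y ∨ y ∈ A x) :
    (∀ x ∈ U, r x x) ∧
      (∀ x ∈ U, ∀ y ∈ U, r x y → r y x → x = y) ∧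
      (∀ x ∈ U, ∀ y ∈ U, ∀ z ∈ U, r x y → r y z → r x z) := by
  refine ⟨fun x _ => (hr x x).mpr (Or.inl rfl), ?_, ?_⟩
  · intro x hx y hy hxy hyx
    rcases (hr x y).mp hxy with rfl | hyA
    · rfl
    rcases (hr y x).mp hyx with rfl | hxA
    · rfl
    by_contra hne
    exact antisym hC4 hdia hcc hw hwt hU hB hC hA hx hy hne hyA hxA
  · intro x hx y hy z hz hxy hyz
    rcases (hr x y).mp hxy with rfl | hyA
    · exact hyz
    rcases (hr y z).mp hyz with rfl | hzA
    · exact hxy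
    by_cases hxz : x = z
    · exact (hr x z).mpr (Or.inl hxz)
    refine (hr x z).mpr (Or.inr ?_)
    have hk := key hw hwt hU hB hC hA hx hy hyA
    rw [hA x hx]
    intro hmem
    rw [hA y hy] at hzA
    rcases hmem with hzB | hzC
    · exact hzA (Set.mem_union_left _ (hk.1 hzB))
    · exact hzA (hk.2 ⟨hzC, fun h => hxz h.symm⟩)

end Paper
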